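/- Let H be a real Hilbert space, A ⊆ H a nonempty bounded set, f : H → ℝ convex and Fréchet differentiable, and δ ∈ (0,1]. Let x⋆ ∈ conv(A) satisfy f(x⋆) ≤ f(w) for all w ∈ conv(A). Then for any x ∈ H and any z ∈ A with ⟪∇f(x), z − x⟫ ≤ δ·inf_{z'∈A} ⟪∇f(x), z' − x⟫ (a δ-approximate Frank–Wolfe LMO output at x), one has ⟪−∇f(x), z − x⟫ ≥ δ·(f(x) − f(x⋆)); that is, the (approximate) Frank–Wolfe duality gap certifies the suboptimality. -/

import Mathlib

open scoped RealInnerProductSpace Pointwise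

/-- First-order condition for convex differentiable functions. -/
lemma grad_ineq_aux {H : Type*} [NormedAddCommGroup H] [InnerProductSpace ℝ H]
    [CompleteSpace H] {f : H → ℝ} {g : H} {x : H}
    (hconv : ConvexOn ℝ Set.univ f) (hd : HasGradientAt f g x) (y : H) :
    ⟪g, y - x⟫ ≤ f y - f x := by
  set φ : ℝ → ℝ := fun t => f (x + t • (y - x)) with hφ
  have hgc : ConvexOn ℝ Set.univ φ := by
    have := hconv.comp_affineMap
      ((AffineMap.lineMap x y : ℝ →ᵃ[ℝ] H))
    have heq : (f ∘ (AffineMap.lineMap x y : ℝ →ᵃ[ℝ] H)) = φ := by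
      funext t
      simp [hφ, AffineMap.lineMap_apply, add_comm]
    rw [heq] at this
    simpa using this
  have hline : HasDerivAt (fun t : ℝ => x + t • (y - x)) (y - x) 0 := by
    simpa using ((hasDerivAt_id (0:ℝ)).smul_const (y - x)).const_add x
  have hder : HasDerivAt φ ⟪g, y - x⟫ 0 := by
    have hfd := hd.hasFDerivAt
    have h0 : x + (0:ℝ) • (y - x) = x := by simp
    have := (h0 ▸ hfd : HasFDerivAt f _ (x + (0:ℝ) • (y - x))).comp_hasDerivAt 0 hline
    exact (by simpa [InnerProductSpace.toDual_apply_apply] using this :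
      HasDerivAt (f ∘ fun t : ℝ => x + t • (y - x)) ⟪g, y - x⟫ 0)
  have hs := hgc.le_slope_of_hasDerivAt (Set.mem_univ 0) (Set.mem_univ 1) one_pos hder
  have : slope φ 0 1 = f y - f x := by
    simp [slope_def_field, hφ]
  linarith [hs.trans_eq this]

/-- The δ-approximate Frank–Wolfe duality gap certifies the suboptimality:
`⟪−∇f(x), z − x⟫ ≥ δ·(f(x) − f(x⋆))`. -/
theorem frankWolfe_gap_certifies_suboptimality
    {H : Type*} [NormedAddCommGroup H] [InnerProductSpace ℝ H] [CompleteSpace H]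
    (A : Set H) (hA : A.Nonempty) (hAbdd : Bornology.IsBounded A)
    (f : H → ℝ) (f' : H → H)
    (hconv : ConvexOn ℝ Set.univ f)
    (hdiff : ∀ w : H, HasGradientAt f (f' w) w)
    (δ : ℝ) (hδ : δ ∈ Set.Ioc (0:ℝ) 1)
    (xstar : H) (hxstar : xstar ∈ convexHull ℝ A)
    (hmin : ∀ w ∈ convexHull ℝ A, f xstar ≤ f w)
    (x : H) (z : H) (hzA : z ∈ A)
    (hlmo : ⟪f' x, z - x⟫ ≤ δ * sInf ((fun w => ⟪f' x, w - x⟫) '' A)) :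
    δ * (f x - f xstar) ≤ ⟪-f' x, z - x⟫ := by
  obtain ⟨hδ0, hδ1⟩ := hδ
  set m : ℝ := sInf ((fun w => ⟪f' x, w - x⟫) '' A) with hm
  -- the image is bounded below and nonempty
  obtain ⟨r, hr⟩ := hAbdd.subset_closedBall x
  have hbdd : BddBelow ((fun w => ⟪f' x, w - x⟫) '' A) := by
    refine ⟨-(‖f' x‖ * r), ?_⟩
    rintro _ ⟨w, hw, rfl⟩
    have h1 : |⟪f' x, w - x⟫| ≤ ‖f' x‖ * ‖w - x‖ := abs_real_inner_le_norm _ _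
    have h2 : ‖w - x‖ ≤ r := by
      have := hr hw
      simpa [Metric.mem_closedBall, dist_eq_norm] using this
    have h3 : ‖f' x‖ * ‖w - x‖ ≤ ‖f' x‖ * r :=
      mul_le_mul_of_nonneg_left h2 (norm_nonneg _)
    nlinarith [abs_nonneg ⟪f' x, w - x⟫, neg_abs_le ⟪f' x, w - x⟫]
  -- m ≤ the linear functional on all of conv A
  have hconvA : ∀ w ∈ convexHull ℝ A, m ≤ ⟪f' x, w - x⟫ := by
    intro w hw
    have hsub : convexHull ℝ A ⊆ {w : H | m ≤ ⟪f' x, w - x⟫} := by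
      apply convexHull_min
      · intro a ha
        exact csInf_le hbdd ⟨a, ha, rfl⟩
      · have : Convex ℝ {w : H | m + ⟪f' x, x⟫ ≤ (innerSL ℝ (f' x)) w} :=
          convex_halfSpace_ge ((innerSL ℝ (f' x)).toLinearMap.isLinear) _
        convert this using 1
        ext w
        simp only [Set.mem_setOf_eq, inner_sub_right, innerSL_apply_apply]
        constructor <;> intro h <;> linarith
    exact hsub hw
  -- first-order condition at x⋆
  have hfo : ⟪f' x, xstar - x⟫ ≤ f xstar - f x := grad_ineq_aux hconv (hdiff x) xstar
  have h4 : m ≤ ⟪f' x, xstar - x⟫ := hconvA xstar hxstar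
  have h5 : f x - f xstar ≤ -m := by linarith
  have h6 : δ * (f x - f xstar) ≤ δ * (-m) :=
    mul_le_mul_of_nonneg_left h5 hδ0.le
  have h7 : δ * (-m) ≤ -⟪f' x, z - x⟫ := by linarith
  calc δ * (f x - f xstar) ≤ -⟪f' x, z - x⟫ := h6.trans h7
    _ = ⟪-f' x, z - x⟫ := by rw [inner_neg_left]
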